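/- Let X be a quaternionic right Banach space and T : D(T) ⊆ X → X a closed right linear operator such that for some ω ∈ [0,π] the ray S_ω = {t·e^{iω} : t > 0, i ∈ 𝕊} lies in the S-resolvent set of T, and ‖Q_s(T)^{-1}‖ ≤ M/|s|² and ‖T·Q_s(T)^{-1}‖ ≤ M/|s| for all s ∈ S_ω. Then for all n, m ∈ ℕ₀ with n ≤ 2m and all s ∈ S_ω, ‖Tⁿ·Q_s(T)^{-m}‖ ≤ (1+3M)^m / |s|^{2m-n}. -/

import Mathlib

noncomputable section

open MulOpposite

local notation "ℍ" => Quaternion ℝ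

/-- The domain `D(Tⁿ)` of the `n`-th power of an operator `T` with domain `D`:
all `x` such that `x, Tx, …, T^{n-1}x ∈ D`. -/
def domN {X : Type*} [AddCommGroup X] [Module ℍᵐᵒᵖ X]
    (T : Module.End ℍᵐᵒᵖ X) (D : Set X) (n : ℕ) : Set X :=
  {x | ∀ j < n, (T ^ j) x ∈ D}

/-- The operator `Q_s(T) = T² − 2 Re(s) T + |s|²` for a quaternion `s`. -/
def Qs {X : Type*} [AddCommGroup X] [Module ℍᵐᵒᵖ X] [Module ℝ X]
    [SMulCommClass ℍᵐᵒᵖ ℝ X] (T : Module.End ℍᵐᵒᵖ X) (s : ℍ) : Module.End ℍᵐᵒᵖ X :=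
  T ^ 2 - (2 * s.re) • T + (‖s‖ ^ 2) • 1

/-- The operator `Q_{t e^{iω}}(T) = T² − 2 t cos(ω) T + t²` associated with the point
`t e^{iω}` of the ray `S_ω` (independent of the imaginary unit `i ∈ 𝕊`). -/
def Qray {X : Type*} [AddCommGroup X] [Module ℍᵐᵒᵖ X] [Module ℝ X]
    [SMulCommClass ℍᵐᵒᵖ ℝ X] (T : Module.End ℍᵐᵒᵖ X) (ω t : ℝ) : Module.End ℍᵐᵒᵖ X :=
  T ^ 2 - (2 * t * Real.cos ω) • T + (t ^ 2) • 1

/-- `‖Tⁿ Q_s(T)^{-m}‖ ≤ (1+3M)^m / |s|^{2m-n}` for `n ≤ 2m` and `s ∈ S_ω`. -/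
theorem pow_pseudoResolvent_bound
    {X : Type*} [NormedAddCommGroup X] [NormedSpace ℝ X] [CompleteSpace X]
    [Module ℍᵐᵒᵖ X] [SMulCommClass ℍᵐᵒᵖ ℝ X]
    -- right Banach space: `‖x·s‖ = ‖x‖·|s|`
    (hnorm : ∀ (x : X) (s : ℍ), ‖(op s) • x‖ = ‖x‖ * ‖s‖)
    -- `T` is a closed right linear operator with domain `D`
    (T : Module.End ℍᵐᵒᵖ X) (D : Submodule ℍᵐᵒᵖ X)
    (hclosed : IsClosed {p : X × X | p.1 ∈ (D : Set X) ∧ T p.1 = p.2})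
    -- the ray `S_ω` lies in the S-resolvent set, with pseudo-resolvents `R t = Q_{te^{iω}}(T)⁻¹`
    (ω : ℝ) (hω : ω ∈ Set.Icc (0:ℝ) Real.pi)
    (M : ℝ) (hM : 0 ≤ M)
    (R : ℝ → Module.End ℍᵐᵒᵖ X)
    (hRcont : ∀ t > 0, Continuous (R t))
    (hRdom : ∀ t > 0, ∀ x : X, R t x ∈ domN T (D : Set X) 2)
    (hQR : ∀ t > 0, ∀ x : X, Qray T ω t (R t x) = x)
    (hRQ : ∀ t > 0, ∀ x ∈ domN T (D : Set X) 2, R t (Qray T ω t x) = x)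
    -- the resolvent bounds `‖Q_s⁻¹‖ ≤ M/|s|²` and `‖T Q_s⁻¹‖ ≤ M/|s|` on `S_ω`
    (hR1 : ∀ t > 0, ∀ x : X, ‖R t x‖ ≤ M / t ^ 2 * ‖x‖)
    (hR2 : ∀ t > 0, ∀ x : X, ‖T (R t x)‖ ≤ M / t * ‖x‖)
    :
    ∀ (n m : ℕ), n ≤ 2 * m → ∀ t > 0, ∀ x : X,
      ‖(T ^ n) (((R t) ^ m) x)‖ ≤ (1 + 3 * M) ^ m / t ^ (2 * m - n) * ‖x‖ := by
  have hMK : M ≤ 1 + 3 * M := by nlinarith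
  have hK0 : (0:ℝ) < 1 + 3 * M := by nlinarith
  -- rational scalar multiplication agrees with the (opposite) quaternionic one
  have hrat : ∀ (q : ℚ) (y : X), ((q:ℝ)) • y = (op ((q:ℝ):ℍ)) • y := by
    intro q y
    rw [ratCast_smul_eq ℝ ℍᵐᵒᵖ]
    norm_cast
  -- `D` is closed under real scalar multiplication and `T` is `ℝ`-linear on `D`
  have hDsmul : ∀ (c : ℝ) (y : X), y ∈ D → (c • y ∈ D ∧ T (c • y) = c • T y) := by
    intro c y hy
    have hq : ∀ n : ℕ, ∃ q : ℚ, |c - (q:ℝ)| < 1/(n+1) := fun n =>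
      exists_rat_near c (by positivity)
    choose q hq using hq
    have htend : Filter.Tendsto (fun n : ℕ => ((q n : ℝ))) Filter.atTop (nhds c) := by
      rw [tendsto_iff_dist_tendsto_zero]
      apply squeeze_zero (fun n => dist_nonneg) (fun n => ?_)
        tendsto_one_div_add_atTop_nhds_zero_nat
      rw [Real.dist_eq, abs_sub_comm]
      exact (hq n).le
    have hmem : ∀ n : ℕ, (((q n : ℝ)) • y, ((q n : ℝ)) • T y) ∈
        {p : X × X | p.1 ∈ (D : Set X) ∧ T p.1 = p.2} := by
      intro n
      constructor
      · rw [hrat]; exact D.smul_mem _ hy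
      · rw [hrat, map_smul, ← hrat]
    have hlim : Filter.Tendsto (fun n : ℕ => (((q n : ℝ)) • y, ((q n : ℝ)) • T y))
        Filter.atTop (nhds (c • y, c • T y)) :=
      (htend.smul_const y).prodMk_nhds (htend.smul_const (T y))
    have hmem2 := hclosed.mem_of_tendsto hlim (Filter.Eventually.of_forall hmem)
    exact ⟨hmem2.1, hmem2.2⟩
  -- membership in `domN T D 2`
  have hdom2 : ∀ y : X, y ∈ domN T (D : Set X) 2 ↔ (y ∈ D ∧ T y ∈ D) := by
    intro y
    constructor
    · intro h
      refine ⟨?_, ?_⟩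
      · simpa using h 0 (by norm_num)
      · simpa [pow_one] using h 1 (by norm_num)
    · rintro ⟨h0, h1⟩ j hj
      interval_cases j
      · simpa using h0
      · simpa [pow_one] using h1
  -- pointwise expansion of `Qray`
  have hQexp : ∀ (t : ℝ) (y : X),
      Qray T ω t y = T (T y) - (2 * t * Real.cos ω) • T y + t ^ 2 • y := by
    intro t y
    simp [Qray, LinearMap.sub_apply, LinearMap.add_apply, LinearMap.smul_apply,
      Module.End.one_apply, pow_two, Module.End.mul_apply]
  -- `T² R t x = x + 2 t cos ω T R t x - t² R t x`
  have hT2R : ∀ t, 0 < t → ∀ x : X,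
      T (T (R t x)) = x + (2 * t * Real.cos ω) • T (R t x) - t ^ 2 • R t x := by
    intro t ht x
    have h := hQR t ht x
    rw [hQexp] at h
    calc T (T (R t x))
        = (T (T (R t x)) - (2 * t * Real.cos ω) • T (R t x) + t ^ 2 • R t x)
            + (2 * t * Real.cos ω) • T (R t x) - t ^ 2 • R t x := by abel
      _ = x + (2 * t * Real.cos ω) • T (R t x) - t ^ 2 • R t x := by rw [h]
  -- `‖T² R t x‖ ≤ (1+3M) ‖x‖`
  have hT2norm : ∀ t, 0 < t → ∀ x : X, ‖T (T (R t x))‖ ≤ (1 + 3 * M) * ‖x‖ := by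
    intro t ht x
    have h1 := hR1 t ht x
    have h2 := hR2 t ht x
    have hc : |Real.cos ω| ≤ 1 := Real.abs_cos_le_one ω
    rw [hT2R t ht x]
    have e1 : ‖x + (2*t*Real.cos ω) • T (R t x) - t^2 • R t x‖ ≤
        ‖x‖ + ‖(2*t*Real.cos ω) • T (R t x)‖ + ‖t^2 • R t x‖ :=
      (norm_sub_le _ _).trans (by gcongr; exact norm_add_le _ _)
    refine e1.trans ?_
    rw [norm_smul, norm_smul]
    have hb : ‖(2*t*Real.cos ω)‖ ≤ 2*t := by
      rw [Real.norm_eq_abs, abs_mul]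
      have h4 : |2*t| = 2*t := abs_of_pos (by linarith)
      nlinarith [abs_nonneg (Real.cos ω), abs_nonneg (2*t)]
    have hbt : ‖(t:ℝ)^2‖ = t^2 := by
      rw [Real.norm_eq_abs]; exact abs_of_pos (by positivity)
    have h2' : t * ‖T (R t x)‖ ≤ M * ‖x‖ := by
      have h5 := mul_le_mul_of_nonneg_left h2 ht.le
      calc t * ‖T (R t x)‖ ≤ t * (M / t * ‖x‖) := h5
        _ = M * ‖x‖ := by field_simp
    have h1' : t^2 * ‖R t x‖ ≤ M * ‖x‖ := by
      have h5 := mul_le_mul_of_nonneg_left h1 (by positivity : (0:ℝ) ≤ t^2)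
      calc t^2 * ‖R t x‖ ≤ t^2 * (M / t^2 * ‖x‖) := h5
        _ = M * ‖x‖ := by field_simp
    have hTRn : (0:ℝ) ≤ ‖T (R t x)‖ := norm_nonneg _
    have hRn : (0:ℝ) ≤ ‖R t x‖ := norm_nonneg _
    rw [hbt]
    nlinarith [mul_le_mul_of_nonneg_right hb hTRn, norm_nonneg x]
  -- commutation `T R t z = R t T z` for `z ∈ D`
  have hcomm : ∀ t, 0 < t → ∀ z, z ∈ D → T (R t z) = R t (T z) := by
    intro t ht z hz
    obtain ⟨hRzD, hTRzD⟩ := (hdom2 _).1 (hRdom t ht z)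
    have hT2D : T (T (R t z)) ∈ D := by
      rw [hT2R t ht z]
      exact D.sub_mem (D.add_mem hz (hDsmul _ _ hTRzD).1) (hDsmul _ _ hRzD).1
    have hv : T (R t z) ∈ domN T (D : Set X) 2 := (hdom2 _).2 ⟨hTRzD, hT2D⟩
    have hu : R t (T z) ∈ domN T (D : Set X) 2 := hRdom t ht (T z)
    have hQv : Qray T ω t (T (R t z)) = T z := by
      have e1 : T (T (T (R t z))) =
          T z + (2*t*Real.cos ω) • T (T (R t z)) - t^2 • T (R t z) := by
        conv_lhs => rw [hT2R t ht z]
        rw [map_sub, map_add, (hDsmul _ _ hTRzD).2, (hDsmul _ _ hRzD).2]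
      rw [hQexp, e1]
      abel
    have hQu : Qray T ω t (R t (T z)) = T z := hQR t ht (T z)
    have hsub : R t (T z) - T (R t z) ∈ domN T (D : Set X) 2 := by
      obtain ⟨a1, a2⟩ := (hdom2 _).1 hu
      obtain ⟨b1, b2⟩ := (hdom2 _).1 hv
      exact (hdom2 _).2 ⟨D.sub_mem a1 b1, by rw [map_sub]; exact D.sub_mem a2 b2⟩
    have h0 : Qray T ω t (R t (T z) - T (R t z)) = 0 := by
      rw [map_sub, hQu, hQv, sub_self]
    have h3 := hRQ t ht _ hsub
    rw [h0, map_zero] at h3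
    exact (sub_eq_zero.mp h3.symm).symm
  -- `T` commutes with powers of `R t` on `D`
  have hpow : ∀ t, 0 < t → ∀ (m : ℕ) (y : X), y ∈ D →
      T (((R t) ^ m) y) = ((R t) ^ m) (T y) := by
    intro t ht m
    induction m with
    | zero => intro y hy; simp
    | succ m ih =>
      intro y hy
      have hRyD : R t y ∈ D := ((hdom2 _).1 (hRdom t ht y)).1
      simp only [pow_succ, Module.End.mul_apply]
      rw [ih (R t y) hRyD, hcomm t ht y hy]
  -- main induction
  have main : ∀ t, 0 < t → ∀ (m n : ℕ), n ≤ 2 * m → ∀ x : X,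
      ‖(T ^ n) (((R t) ^ m) x)‖ ≤ (1 + 3 * M) ^ m / t ^ (2 * m - n) * ‖x‖ := by
    intro t ht m
    induction m with
    | zero =>
      intro n hn x
      obtain rfl : n = 0 := by omega
      simp
    | succ m ih =>
      intro n hn x
      have hRxdom := (hdom2 _).1 (hRdom t ht x)
      have hp : (0:ℝ) ≤ (1+3*M)^m / t^(2*m-n) :=
        le_of_lt (div_pos (pow_pos hK0 m) (pow_pos ht _))
      have hKm : (0:ℝ) ≤ (1+3*M)^m := (pow_pos hK0 m).le
      rcases (by omega : n ≤ 2*m ∨ n = 2*m+1 ∨ n = 2*m+2) with hn' | hn' | hn'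
      · have e : ((R t) ^ (m+1)) x = ((R t) ^ m) (R t x) := by
          rw [pow_succ, Module.End.mul_apply]
        calc ‖(T ^ n) (((R t) ^ (m+1)) x)‖
            = ‖(T ^ n) (((R t) ^ m) (R t x))‖ := by rw [e]
          _ ≤ (1+3*M)^m / t^(2*m-n) * ‖R t x‖ := ih n hn' (R t x)
          _ ≤ (1+3*M)^m / t^(2*m-n) * (M / t^2 * ‖x‖) :=
              mul_le_mul_of_nonneg_left (hR1 t ht x) hp
          _ ≤ (1+3*M)^m / t^(2*m-n) * ((1+3*M) / t^2 * ‖x‖) :=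
              mul_le_mul_of_nonneg_left
                (mul_le_mul_of_nonneg_right
                  (div_le_div_of_nonneg_right hMK (by positivity)) (norm_nonneg x)) hp
          _ = (1+3*M)^(m+1) / t^(2*(m+1)-n) * ‖x‖ := by
              rw [show 2*(m+1)-n = (2*m-n)+2 by omega, pow_add, pow_succ]; ring
      · subst hn'
        have e : (T^(2*m+1)) (((R t)^(m+1)) x) = (T^(2*m)) (((R t)^m) (T (R t x))) := by
          have h1 : ∀ z : X, (T^(2*m+1)) z = (T^(2*m)) (T z) := by
            intro z; rw [pow_succ, Module.End.mul_apply]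
          rw [h1, pow_succ, Module.End.mul_apply, hpow t ht m (R t x) hRxdom.1]
        calc ‖(T ^ (2*m+1)) (((R t) ^ (m+1)) x)‖
            = ‖(T^(2*m)) (((R t)^m) (T (R t x)))‖ := by rw [e]
          _ ≤ (1+3*M)^m / t^(2*m-2*m) * ‖T (R t x)‖ := ih (2*m) le_rfl _
          _ = (1+3*M)^m * ‖T (R t x)‖ := by rw [Nat.sub_self, pow_zero, div_one]
          _ ≤ (1+3*M)^m * (M / t * ‖x‖) :=
              mul_le_mul_of_nonneg_left (hR2 t ht x) hKm
          _ ≤ (1+3*M)^m * ((1+3*M) / t * ‖x‖) :=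
              mul_le_mul_of_nonneg_left
                (mul_le_mul_of_nonneg_right (div_le_div_of_nonneg_right hMK ht.le)
                  (norm_nonneg x)) hKm
          _ = (1+3*M)^(m+1) / t^(2*(m+1)-(2*m+1)) * ‖x‖ := by
              rw [show 2*(m+1)-(2*m+1) = 1 by omega, pow_one, pow_succ]; ring
      · subst hn'
        have e : (T^(2*m+2)) (((R t)^(m+1)) x) = (T^(2*m)) (((R t)^m) (T (T (R t x)))) := by
          have h1 : ∀ z : X, (T^(2*m+2)) z = (T^(2*m)) (T (T z)) := by
            intro z
            rw [show 2*m+2 = (2*m+1)+1 by ring, pow_succ, Module.End.mul_apply,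
              pow_succ, Module.End.mul_apply]
          rw [h1, pow_succ, Module.End.mul_apply, hpow t ht m (R t x) hRxdom.1,
            hpow t ht m (T (R t x)) hRxdom.2]
        calc ‖(T ^ (2*m+2)) (((R t) ^ (m+1)) x)‖
            = ‖(T^(2*m)) (((R t)^m) (T (T (R t x))))‖ := by rw [e]
          _ ≤ (1+3*M)^m / t^(2*m-2*m) * ‖T (T (R t x))‖ := ih (2*m) le_rfl _
          _ = (1+3*M)^m * ‖T (T (R t x))‖ := by rw [Nat.sub_self, pow_zero, div_one]
          _ ≤ (1+3*M)^m * ((1+3*M) * ‖x‖) :=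
              mul_le_mul_of_nonneg_left (hT2norm t ht x) hKm
          _ = (1+3*M)^(m+1) / t^(2*(m+1)-(2*m+2)) * ‖x‖ := by
              rw [show 2*(m+1)-(2*m+2) = 0 by omega, pow_zero, div_one, pow_succ]; ring
  intro n m hnm t ht x
  exact main t ht m n hnm x
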